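/- Let c > 0, 0 < r < T, and let Λ ⊆ 𝓛 be a countable set. Then #(Λ ∩ (F_{T,c} ∖ F_{r,c})) ≤ (1/r)·∫₀^T #{v ∈ Λ : g_t v ∈ F_{r,c}} dt ≤ #(Λ ∩ F_{T+r,c}), where the cardinalities and the integral are taken in the extended nonnegative reals [0,∞]. -/

import Mathlib

noncomputable section

open MeasureTheory Metric Filter Topology
open scoped ENNReal

/-- The index of the coordinate `x_{n+2}` (0-indexed: `n+1`). -/
def lastC (n : ℕ) : Fin (n + 2) := Fin.last (n + 1)

/-- The index of the coordinate `x_{n+1}` (0-indexed: `n`). -/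
def sndC (n : ℕ) : Fin (n + 2) := ⟨n, by omega⟩

/-- The quadratic form `Q(x) = x_1² + ⋯ + x_{n+1}² − x_{n+2}²`. -/
def Qf (n : ℕ) (x : EuclideanSpace ℝ (Fin (n + 2))) : ℝ :=
  (∑ i : Fin (n + 1), x (Fin.castSucc i) ^ 2) - x (lastC n) ^ 2

/-- The positive light cone. -/
def lightCone (n : ℕ) : Set (EuclideanSpace ℝ (Fin (n + 2))) :=
  {x | Qf n x = 0 ∧ 0 ≤ x (lastC n)}

/-- `Λ₀`: the intersection of the light cone with `ℤ^{n+1} × ℤ_{>0}`. -/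
def Lat0 (n : ℕ) : Set (EuclideanSpace ℝ (Fin (n + 2))) :=
  {x | x ∈ lightCone n ∧ (∀ i, ∃ m : ℤ, x i = (m : ℝ)) ∧ 0 < x (lastC n)}

/-- The set `F_{T,c}`. -/
def Fset (n : ℕ) (T c : ℝ) : Set (EuclideanSpace ℝ (Fin (n + 2))) :=
  {x | x ∈ lightCone n ∧ x (lastC n) ^ 2 - x (sndC n) ^ 2 < c ^ 2 ∧
    1 ≤ x (sndC n) + x (lastC n) ∧ x (sndC n) + x (lastC n) < Real.exp T}

/-- The set `E_{T,c}`. -/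
def Eset (n : ℕ) (T c : ℝ) : Set (EuclideanSpace ℝ (Fin (n + 2))) :=
  {x | x ∈ lightCone n ∧ 2 * x (lastC n) * (x (lastC n) - x (sndC n)) < c ^ 2 ∧
    1 ≤ x (lastC n) ∧ x (lastC n) < Real.cosh T}

/-- The first `n+1` coordinates of a point of `ℝ^{n+2}`. -/
def firstPart (n : ℕ) (x : EuclideanSpace ℝ (Fin (n + 2))) : EuclideanSpace ℝ (Fin (n + 1)) :=
  WithLp.toLp 2 (fun i => x (Fin.castSucc i))

/-- The one-parameter diagonal flow `g_t`. -/
def gmap (n : ℕ) (t : ℝ) (x : EuclideanSpace ℝ (Fin (n + 2))) :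
    EuclideanSpace ℝ (Fin (n + 2)) :=
  WithLp.toLp 2 (fun i =>
    if i = sndC n then Real.cosh t * x (sndC n) - Real.sinh t * x (lastC n)
    else if i = lastC n then - Real.sinh t * x (sndC n) + Real.cosh t * x (lastC n)
    else x i)

section Aux

variable {n : ℕ}

lemma sndC_ne_lastC (n : ℕ) : sndC n ≠ lastC n := by
  intro h
  have h2 : n = n + 1 := congrArg Fin.val h
  omega

lemma gmap_snd (t : ℝ) (x : EuclideanSpace ℝ (Fin (n + 2))) :
    gmap n t x (sndC n) = Real.cosh t * x (sndC n) - Real.sinh t * x (lastC n) := by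
  simp [gmap]

lemma gmap_last (t : ℝ) (x : EuclideanSpace ℝ (Fin (n + 2))) :
    gmap n t x (lastC n) = - Real.sinh t * x (sndC n) + Real.cosh t * x (lastC n) := by
  simp [gmap, (sndC_ne_lastC n).symm]

lemma gmap_other (t : ℝ) (x : EuclideanSpace ℝ (Fin (n + 2))) (j : Fin n) :
    gmap n t x (Fin.castSucc (Fin.castSucc j)) = x (Fin.castSucc (Fin.castSucc j)) := by
  have hj := j.isLt
  have h1 : (Fin.castSucc (Fin.castSucc j)) ≠ sndC n := by
    intro h
    have h2 : (j : ℕ) = n := congrArg Fin.val h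
    omega
  have h2 : (Fin.castSucc (Fin.castSucc j)) ≠ lastC n := by
    intro h
    have h2 : (j : ℕ) = n + 1 := congrArg Fin.val h
    omega
  simp [gmap, h1, h2]

lemma Qf_split (x : EuclideanSpace ℝ (Fin (n + 2))) :
    Qf n x = (∑ j : Fin n, x (Fin.castSucc (Fin.castSucc j)) ^ 2)
      + x (sndC n) ^ 2 - x (lastC n) ^ 2 := by
  unfold Qf
  rw [Fin.sum_univ_castSucc (f := fun i : Fin (n + 1) => x (Fin.castSucc i) ^ 2)]
  have h : Fin.castSucc (Fin.last n) = sndC n := Fin.val_injective rfl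
  rw [h]

lemma sq_le_of_cone {x : EuclideanSpace ℝ (Fin (n + 2))} (hx : x ∈ lightCone n) :
    x (sndC n) ^ 2 ≤ x (lastC n) ^ 2 := by
  have h := hx.1
  rw [Qf_split] at h
  have h2 : (0:ℝ) ≤ ∑ j : Fin n, x (Fin.castSucc (Fin.castSucc j)) ^ 2 :=
    Finset.sum_nonneg fun _ _ => sq_nonneg _
  linarith

lemma Qf_gmap (t : ℝ) (x : EuclideanSpace ℝ (Fin (n + 2))) :
    Qf n (gmap n t x) = Qf n x := by
  rw [Qf_split, Qf_split (x := x), gmap_snd, gmap_last]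
  rw [Finset.sum_congr rfl (fun j _ => by rw [gmap_other t x j])]
  have h := Real.cosh_sq t
  ring_nf
  nlinarith [h]

lemma diff_gmap (t : ℝ) (x : EuclideanSpace ℝ (Fin (n + 2))) :
    gmap n t x (lastC n) ^ 2 - gmap n t x (sndC n) ^ 2
      = x (lastC n) ^ 2 - x (sndC n) ^ 2 := by
  rw [gmap_snd, gmap_last]
  linear_combination (x (lastC n) ^ 2 - x (sndC n) ^ 2) * Real.cosh_sq t

lemma sum_gmap (t : ℝ) (x : EuclideanSpace ℝ (Fin (n + 2))) :
    gmap n t x (sndC n) + gmap n t x (lastC n)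
      = Real.exp (-t) * (x (sndC n) + x (lastC n)) := by
  rw [gmap_snd, gmap_last, ← Real.cosh_sub_sinh]
  ring

lemma gmap_mem_cone {x : EuclideanSpace ℝ (Fin (n + 2))} (t : ℝ) (hx : x ∈ lightCone n) :
    gmap n t x ∈ lightCone n := by
  refine ⟨by rw [Qf_gmap]; exact hx.1, ?_⟩
  rw [gmap_last]
  have h1 := sq_le_of_cone hx
  have h2 := hx.2
  nlinarith [Real.cosh_sq t, Real.cosh_pos t,
    sq_nonneg (Real.sinh t * x (sndC n) - Real.cosh t * x (lastC n)),
    sq_nonneg (Real.sinh t * x (sndC n) + Real.cosh t * x (lastC n)),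
    mul_nonneg (Real.cosh_pos t).le h2]

lemma mem_Fset_gmap_iff {x : EuclideanSpace ℝ (Fin (n + 2))} (hx : x ∈ lightCone n)
    (t ρ c : ℝ) :
    gmap n t x ∈ Fset n ρ c ↔
      (x (lastC n) ^ 2 - x (sndC n) ^ 2 < c ^ 2 ∧
        Real.exp t ≤ x (sndC n) + x (lastC n) ∧
        x (sndC n) + x (lastC n) < Real.exp (t + ρ)) := by
  have hepos := Real.exp_pos t
  have hkey : Real.exp t * Real.exp (-t) = 1 := by
    rw [← Real.exp_add]; simp
  have hkey2 : Real.exp (-t) * Real.exp t = 1 := by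
    rw [← Real.exp_add]; simp
  have hu : Real.exp t * (Real.exp (-t) * (x (sndC n) + x (lastC n)))
      = x (sndC n) + x (lastC n) := by
    rw [← mul_assoc, hkey, one_mul]
  constructor
  · rintro ⟨-, h1, h2, h3⟩
    rw [diff_gmap] at h1
    rw [sum_gmap] at h2 h3
    refine ⟨h1, ?_, ?_⟩
    · have h4 := mul_le_mul_of_nonneg_left h2 hepos.le
      rw [hu, mul_one] at h4
      exact h4
    · have h4 := mul_lt_mul_of_pos_left h3 hepos
      rw [hu, ← Real.exp_add] at h4
      exact h4
  · rintro ⟨h1, h2, h3⟩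
    have hneg := Real.exp_pos (-t)
    refine ⟨gmap_mem_cone t hx, ?_, ?_, ?_⟩
    · rw [diff_gmap]; exact h1
    · rw [sum_gmap]
      have h4 := mul_le_mul_of_nonneg_left h2 hneg.le
      rw [hkey2] at h4
      exact h4
    · rw [sum_gmap]
      have h4 := mul_lt_mul_of_pos_left h3 hneg
      rw [Real.exp_add t ρ, ← mul_assoc, hkey2, one_mul] at h4
      exact h4

lemma tsum_if_encard {α : Type*} (Λ D : Set α) (ρ : ℝ≥0∞) :
    ∑' v : ↥Λ, Set.indicator D (fun _ => ρ) (↑v : α) = ((Λ ∩ D).encard : ℝ≥0∞) * ρ := by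
  classical
  have h1 : Λ ∩ D = Subtype.val '' {w : ↥Λ | (↑w : α) ∈ D} := by
    ext x
    constructor
    · rintro ⟨hxΛ, hxD⟩; exact ⟨⟨x, hxΛ⟩, hxD, rfl⟩
    · rintro ⟨⟨y, hy⟩, hyD, rfl⟩; exact ⟨hy, hyD⟩
  rw [h1, Subtype.val_injective.encard_image, ← ENNReal.tsum_set_const]
  exact ((tsum_subtype {w : ↥Λ | (↑w : α) ∈ D} (fun _ => ρ)).trans
    (tsum_congr fun v => by simp [Set.indicator_apply])).symm

end Aux

/-- **Equation (4.1)**: sandwiching the orbit integral of the Siegel transform of the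
characteristic function of `F_{r,c}` between lattice point counts. -/
theorem siegel_transform_orbit_integral_sandwich (n : ℕ) (hn : 1 ≤ n)
    (c r T : ℝ) (hc : 0 < c) (hr : 0 < r) (hrT : r < T)
    (Λ : Set (EuclideanSpace ℝ (Fin (n + 2)))) (hΛc : Λ.Countable)
    (hΛL : Λ ⊆ lightCone n) :
    ((Λ ∩ (Fset n T c \ Fset n r c)).encard : ℝ≥0∞) ≤
        (1 / ENNReal.ofReal r) *
          ∫⁻ t in Set.Icc (0 : ℝ) T, ({v ∈ Λ | gmap n t v ∈ Fset n r c}.encard : ℝ≥0∞) ∧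
      (1 / ENNReal.ofReal r) *
          ∫⁻ t in Set.Icc (0 : ℝ) T, ({v ∈ Λ | gmap n t v ∈ Fset n r c}.encard : ℝ≥0∞) ≤
        ((Λ ∩ Fset n (T + r) c).encard : ℝ≥0∞) := by
  classical
  have hrne : ENNReal.ofReal r ≠ 0 := by
    simp [ENNReal.ofReal_eq_zero, not_le, hr]
  have hrtop : ENNReal.ofReal r ≠ ⊤ := ENNReal.ofReal_ne_top
  haveI : Countable ↥Λ := hΛc.to_subtype
  set S : ↥Λ → Set ℝ := fun v => {t | gmap n t ↑v ∈ Fset n r c} with hS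
  have hchar : ∀ v : ↥Λ, S v = {t : ℝ |
      (↑v : EuclideanSpace ℝ (Fin (n+2))) (lastC n) ^ 2 - (↑v : EuclideanSpace ℝ (Fin (n+2))) (sndC n) ^ 2 < c ^ 2 ∧
      Real.exp t ≤ (↑v : EuclideanSpace ℝ (Fin (n+2))) (sndC n) + (↑v : EuclideanSpace ℝ (Fin (n+2))) (lastC n) ∧
      (↑v : EuclideanSpace ℝ (Fin (n+2))) (sndC n) + (↑v : EuclideanSpace ℝ (Fin (n+2))) (lastC n) < Real.exp (t + r)} :=
    fun v => Set.ext fun t => mem_Fset_gmap_iff (hΛL v.2) t r c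
  have hmeas : ∀ v : ↥Λ, MeasurableSet (S v) := by
    intro v
    rw [hchar v]
    have hset : {t : ℝ |
        (↑v : EuclideanSpace ℝ (Fin (n+2))) (lastC n) ^ 2 - (↑v : EuclideanSpace ℝ (Fin (n+2))) (sndC n) ^ 2 < c ^ 2 ∧
        Real.exp t ≤ (↑v : EuclideanSpace ℝ (Fin (n+2))) (sndC n) + (↑v : EuclideanSpace ℝ (Fin (n+2))) (lastC n) ∧
        (↑v : EuclideanSpace ℝ (Fin (n+2))) (sndC n) + (↑v : EuclideanSpace ℝ (Fin (n+2))) (lastC n) < Real.exp (t + r)}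
      = {t : ℝ | (↑v : EuclideanSpace ℝ (Fin (n+2))) (lastC n) ^ 2 - (↑v : EuclideanSpace ℝ (Fin (n+2))) (sndC n) ^ 2 < c ^ 2} ∩
        ({t : ℝ | Real.exp t ≤ (↑v : EuclideanSpace ℝ (Fin (n+2))) (sndC n) + (↑v : EuclideanSpace ℝ (Fin (n+2))) (lastC n)} ∩
        {t : ℝ | (↑v : EuclideanSpace ℝ (Fin (n+2))) (sndC n) + (↑v : EuclideanSpace ℝ (Fin (n+2))) (lastC n) < Real.exp (t + r)}) := rfl
    rw [hset]
    exact (MeasurableSet.const _).inter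
      ((measurableSet_le Real.measurable_exp measurable_const).inter
        (measurableSet_lt measurable_const
          (Real.measurable_exp.comp (measurable_id.add_const r))))
  have hcard : ∀ t : ℝ, ({v ∈ Λ | gmap n t v ∈ Fset n r c}.encard : ℝ≥0∞)
      = ∑' v : ↥Λ, Set.indicator (S v) (1 : ℝ → ℝ≥0∞) t := by
    intro t
    have h1 : {v ∈ Λ | gmap n t v ∈ Fset n r c}
        = Subtype.val '' {v : ↥Λ | t ∈ S v} := by
      ext x
      constructor
      · rintro ⟨hxΛ, hx⟩; exact ⟨⟨x, hxΛ⟩, hx, rfl⟩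
      · rintro ⟨⟨y, hy⟩, hyS, rfl⟩; exact ⟨hy, hyS⟩
    rw [h1, Subtype.val_injective.encard_image, ← ENNReal.tsum_set_one]
    exact (tsum_subtype {v : ↥Λ | t ∈ S v} (fun _ => (1 : ℝ≥0∞))).trans
      (tsum_congr fun v => by simp [Set.indicator_apply])
  have hint : (∫⁻ t in Set.Icc (0 : ℝ) T, ({v ∈ Λ | gmap n t v ∈ Fset n r c}.encard : ℝ≥0∞))
      = ∑' v : ↥Λ, volume (S v ∩ Set.Icc (0 : ℝ) T) := by
    simp_rw [hcard]
    rw [lintegral_tsum (fun v => ((measurable_one.indicator (hmeas v)).aemeasurable))]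
    refine tsum_congr fun v => ?_
    rw [lintegral_indicator (hmeas v)]
    simp [Measure.restrict_restrict (hmeas v)]
  have hlow : ∀ v : ↥Λ,
      Set.indicator (Fset n T c \ Fset n r c) (fun _ => ENNReal.ofReal r)
        (↑v : EuclideanSpace ℝ (Fin (n+2))) ≤ volume (S v ∩ Set.Icc (0:ℝ) T) := by
    intro v
    by_cases hv : (↑v : EuclideanSpace ℝ (Fin (n+2))) ∈ Fset n T c \ Fset n r c
    · rw [Set.indicator_of_mem hv]
      obtain ⟨⟨hcone, hdiff, hu1, huT⟩, hnot⟩ := hv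
      set u := (↑v : EuclideanSpace ℝ (Fin (n+2))) (sndC n)
        + (↑v : EuclideanSpace ℝ (Fin (n+2))) (lastC n) with hu
      have hu0 : (0:ℝ) < u := by linarith
      have hur : Real.exp r ≤ u := by
        by_contra hlt
        push_neg at hlt
        exact hnot ⟨hcone, hdiff, hu1, hlt⟩
      have hlogr : r ≤ Real.log u := (Real.le_log_iff_exp_le hu0).2 hur
      have hlogT : Real.log u < T := (Real.log_lt_iff_lt_exp hu0).2 huT
      have hsub : Set.Ioc (Real.log u - r) (Real.log u) ⊆ S v ∩ Set.Icc 0 T := by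
        rintro t ⟨ht1, ht2⟩
        constructor
        · rw [hchar v]
          refine ⟨hdiff, ?_, ?_⟩
          · calc Real.exp t ≤ Real.exp (Real.log u) := Real.exp_le_exp.2 ht2
              _ = u := Real.exp_log hu0
          · calc u = Real.exp (Real.log u) := (Real.exp_log hu0).symm
              _ < Real.exp (t + r) := Real.exp_lt_exp.2 (by linarith)
        · exact ⟨by linarith, by linarith⟩
      calc ENNReal.ofReal r = volume (Set.Ioc (Real.log u - r) (Real.log u)) := by
            rw [Real.volume_Ioc]; congr 1; ring
        _ ≤ _ := measure_mono hsub
    · rw [Set.indicator_of_notMem hv]; exact zero_le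
  have hup : ∀ v : ↥Λ, volume (S v ∩ Set.Icc (0:ℝ) T)
      ≤ Set.indicator (Fset n (T + r) c) (fun _ => ENNReal.ofReal r)
          (↑v : EuclideanSpace ℝ (Fin (n+2))) := by
    intro v
    by_cases hv : (↑v : EuclideanSpace ℝ (Fin (n+2))) ∈ Fset n (T + r) c
    · rw [Set.indicator_of_mem hv]
      obtain ⟨hcone, hdiff, hu1, huTr⟩ := hv
      set u := (↑v : EuclideanSpace ℝ (Fin (n+2))) (sndC n)
        + (↑v : EuclideanSpace ℝ (Fin (n+2))) (lastC n) with hu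
      have hu0 : (0:ℝ) < u := by linarith
      have hsub : S v ∩ Set.Icc 0 T ⊆ Set.Ioc (Real.log u - r) (Real.log u) := by
        rintro t ⟨htS, htI⟩
        rw [hchar v] at htS
        obtain ⟨-, h2, h3⟩ := htS
        constructor
        · have h4 : Real.log u < t + r := (Real.log_lt_iff_lt_exp hu0).2 h3
          linarith
        · exact (Real.le_log_iff_exp_le hu0).2 h2
      calc volume (S v ∩ Set.Icc 0 T)
          ≤ volume (Set.Ioc (Real.log u - r) (Real.log u)) := measure_mono hsub
        _ = ENNReal.ofReal r := by rw [Real.volume_Ioc]; congr 1; ring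
    · rw [Set.indicator_of_notMem hv]
      have hempty : S v ∩ Set.Icc (0:ℝ) T = ∅ := by
        rw [Set.eq_empty_iff_forall_notMem]
        rintro t ⟨htS, htI⟩
        rw [hchar v] at htS
        obtain ⟨h1, h2, h3⟩ := htS
        refine hv ⟨hΛL v.2, h1, ?_, ?_⟩
        · calc (1:ℝ) = Real.exp 0 := Real.exp_zero.symm
            _ ≤ Real.exp t := Real.exp_le_exp.2 htI.1
            _ ≤ _ := h2
        · exact lt_of_lt_of_le h3 (Real.exp_le_exp.2 (by linarith [htI.2]))
      rw [hempty]
      simp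
  have hEl := tsum_if_encard Λ (Fset n T c \ Fset n r c) (ENNReal.ofReal r)
  have hEr := tsum_if_encard Λ (Fset n (T + r) c) (ENNReal.ofReal r)
  have hIl : ((Λ ∩ (Fset n T c \ Fset n r c)).encard : ℝ≥0∞) * ENNReal.ofReal r
      ≤ ∑' v : ↥Λ, volume (S v ∩ Set.Icc (0:ℝ) T) := by
    rw [← hEl]; exact ENNReal.tsum_le_tsum hlow
  have hIr : (∑' v : ↥Λ, volume (S v ∩ Set.Icc (0:ℝ) T))
      ≤ ((Λ ∩ Fset n (T + r) c).encard : ℝ≥0∞) * ENNReal.ofReal r := by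
    rw [← hEr]; exact ENNReal.tsum_le_tsum hup
  have hcancel : ∀ a : ℝ≥0∞, (1 / ENNReal.ofReal r) * (a * ENNReal.ofReal r) = a := by
    intro a
    rw [one_div, mul_comm a, ← mul_assoc, ENNReal.inv_mul_cancel hrne hrtop, one_mul]
  rw [hint]
  constructor
  · calc ((Λ ∩ (Fset n T c \ Fset n r c)).encard : ℝ≥0∞)
        = (1 / ENNReal.ofReal r)
          * (((Λ ∩ (Fset n T c \ Fset n r c)).encard : ℝ≥0∞) * ENNReal.ofReal r) :=
          (hcancel _).symm
      _ ≤ (1 / ENNReal.ofReal r) * ∑' v : ↥Λ, volume (S v ∩ Set.Icc (0:ℝ) T) :=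
          mul_le_mul_right hIl _
  · calc (1 / ENNReal.ofReal r) * ∑' v : ↥Λ, volume (S v ∩ Set.Icc (0:ℝ) T)
        ≤ (1 / ENNReal.ofReal r)
          * (((Λ ∩ Fset n (T + r) c).encard : ℝ≥0∞) * ENNReal.ofReal r) :=
          mul_le_mul_right hIr _
      _ = ((Λ ∩ Fset n (T + r) c).encard : ℝ≥0∞) := hcancel _
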